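/- Under Assumptions (A5) and (A6), setting γ := max_{t∈T}(m_t − h_t − 1) ∈ (0,1], one has Δ_u(n) = Θ(n^γ): there exist constants 0 < c₁ ≤ c₂ and N ∈ ℕ such that for all n ≥ N, c₁·n^γ ≤ Δ_u(n) ≤ c₂·n^γ. -/

import Mathlib

open MeasureTheory ProbabilityTheory Matrix Filter

/-- The spectral norm of a real square matrix. -/
noncomputable def specNorm {n : ℕ} (A : Matrix (Fin n) (Fin n) ℝ) : ℝ :=
  ‖Matrix.toEuclideanCLM (𝕜 := ℝ) A‖

/-- The `‖·‖_∞` norm of a matrix: maximum absolute row sum. -/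
noncomputable def rowSumNorm {n : ℕ} (A : Matrix (Fin n) (Fin n) ℝ) : ℝ :=
  ⨆ i, ∑ j, |A i j|

/-- The adjacency matrix of the complete graph on the vertices of the ordered list `k.2`. -/
def completeSub {T : Type} {m : T → ℕ} (n : ℕ)
    (k : Σ t : T, Fin (m t) ↪ Fin n) : Matrix (Fin n) (Fin n) ℝ :=
  fun i j => if i ≠ j ∧ (∃ a, k.2 a = i) ∧ (∃ b, k.2 b = j) then 1 else 0

/-! ### Auxiliary lemmas -/

lemma myIntegrable_of_bound {Ω : Type*} [MeasurableSpace Ω] {μ : Measure Ω}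
    [IsProbabilityMeasure μ] {f : Ω → ℝ} (hf : Measurable f) (C : ℝ)
    (hC : ∀ ω, |f ω| ≤ C) : Integrable f μ :=
  (integrable_const C).mono' hf.aestronglyMeasurable
    (Filter.Eventually.of_forall (by simpa using hC))

lemma myIntegral_of_01 {Ω : Type*} [MeasurableSpace Ω] (μ : Measure Ω)
    [IsProbabilityMeasure μ] {f : Ω → ℝ} (hmeas : Measurable f)
    (h01 : ∀ ω, f ω = 0 ∨ f ω = 1) {q : ℝ} (hq : 0 ≤ q)
    (hμ : μ {ω | f ω = 1} = ENNReal.ofReal q) : ∫ ω, f ω ∂μ = q := by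
  have hset : MeasurableSet {ω | f ω = 1} := hmeas (measurableSet_singleton 1)
  have hfi : f = Set.indicator {ω | f ω = 1} (fun _ => (1:ℝ)) := by
    funext ω
    rcases h01 ω with hω | hω <;> simp [Set.indicator, hω]
  rw [hfi]
  rw [integral_indicator_const (1:ℝ) hset, measureReal_def, hμ, ENNReal.toReal_ofReal hq, smul_eq_mul, mul_one]

lemma mySumEq01 {ι : Type*} [DecidableEq ι] (F : Finset ι) (y : ι → ℝ)
    (hy : ∀ k ∈ F, y k = 0 ∨ y k = 1) :
    ∑ k ∈ F, y k = ((F.filter (fun k => y k = 1)).card : ℝ) := by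
  rw [Finset.card_filter]
  push_cast
  refine Finset.sum_congr rfl fun k hk => ?_
  rcases hy k hk with h | h <;> simp [h]

lemma myMin_sum_ge {ι : Type*} [DecidableEq ι] (F : Finset ι) (y : ι → ℝ)
    (hy : ∀ k ∈ F, y k = 0 ∨ y k = 1) :
    (∑ k ∈ F, y k) - ((∑ k ∈ F, y k)^2 - ∑ k ∈ F, y k)/2 ≤ min (∑ k ∈ F, y k) 1 := by
  rw [mySumEq01 F y hy]
  set c := (F.filter (fun k => y k = 1)).card with hc
  rcases Nat.lt_or_ge c 1 with h | h
  · interval_cases c <;> norm_num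
  · rcases Nat.lt_or_ge c 2 with h2 | h2
    · interval_cases c <;> norm_num
    · have h2' : (2:ℝ) ≤ (c:ℝ) := by exact_mod_cast h2
      have hmin : min ((c:ℕ):ℝ) 1 = 1 := min_eq_right (by linarith)
      rw [hmin]
      nlinarith

lemma mySq_sum_01 {ι : Type*} [DecidableEq ι] (F : Finset ι) (y : ι → ℝ)
    (hy : ∀ k ∈ F, y k = 0 ∨ y k = 1) :
    (∑ k ∈ F, y k)^2 = (∑ k ∈ F, y k) + ∑ k ∈ F, ∑ k' ∈ F.erase k, y k * y k' := by
  rw [sq, Finset.sum_mul_sum, ← Finset.sum_add_distrib]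
  refine Finset.sum_congr rfl fun k hk => ?_
  rw [← Finset.add_sum_erase _ _ hk]
  have hyy : y k * y k = y k := by rcases hy k hk with h | h <;> simp [h]
  rw [hyy]

lemma myBernoulli_min_bounds {Ω : Type*} [MeasurableSpace Ω] {μ : Measure Ω}
    [IsProbabilityMeasure μ] {ι : Type*} [DecidableEq ι] (F : Finset ι)
    (x : ι → Ω → ℝ) (p : ι → ℝ)
    (hxmeas : ∀ k, Measurable (x k))
    (hx01 : ∀ k ω, x k ω = 0 ∨ x k ω = 1)
    (hxint : ∀ k, ∫ ω, x k ω ∂μ = p k)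
    (hxmul : ∀ k k', k ≠ k' → ∫ ω, x k ω * x k' ω ∂μ = p k * p k') :
    ((∑ k ∈ F, p k) - (∑ k ∈ F, p k)^2/2 ≤ ∫ ω, min (∑ k ∈ F, x k ω) 1 ∂μ) ∧
    (∫ ω, min (∑ k ∈ F, x k ω) 1 ∂μ ≤ ∑ k ∈ F, p k) ∧
    (0 ≤ ∫ ω, min (∑ k ∈ F, x k ω) 1 ∂μ) := by
  have hb : ∀ k (ω : Ω), |x k ω| ≤ 1 := fun k ω => by
    rcases hx01 k ω with h | h <;> simp [h]
  have hnn : ∀ k (ω : Ω), 0 ≤ x k ω := fun k ω => by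
    rcases hx01 k ω with h | h <;> simp [h]
  have hxi : ∀ k, Integrable (x k) μ := fun k =>
    myIntegrable_of_bound (hxmeas k) 1 (hb k)
  have hpnn : ∀ k, 0 ≤ p k := fun k => by
    rw [← hxint k]; exact integral_nonneg (hnn k)
  set S : Ω → ℝ := fun ω => ∑ k ∈ F, x k ω with hS
  have hSmeas : Measurable S := Finset.measurable_sum F fun k _ => hxmeas k
  have hSnn : ∀ ω, 0 ≤ S ω := fun ω => Finset.sum_nonneg fun k _ => hnn k ω
  have hSint : Integrable S μ := integrable_finset_sum F fun k _ => hxi k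
  have hES : ∫ ω, S ω ∂μ = ∑ k ∈ F, p k := by
    rw [integral_finset_sum F fun k _ => hxi k]
    exact Finset.sum_congr rfl fun k _ => hxint k
  have hminmeas : Measurable (fun ω => min (S ω) 1) := hSmeas.min measurable_const
  have hminb : ∀ ω, |min (S ω) 1| ≤ 1 := fun ω => by
    rw [abs_of_nonneg (le_min (hSnn ω) one_pos.le)]
    exact min_le_right _ _
  have hminint : Integrable (fun ω => min (S ω) 1) μ :=
    myIntegrable_of_bound hminmeas 1 hminb
  refine ⟨?_, ?_, ?_⟩
  · have hprodint : ∀ k k' : ι, Integrable (fun ω => x k ω * x k' ω) μ := by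
      intro k k'
      refine myIntegrable_of_bound ((hxmeas k).mul (hxmeas k')) 1 fun ω => ?_
      rw [abs_mul]
      exact mul_le_one₀ (hb k ω) (abs_nonneg _) (hb k' ω)
    have hinnerint : ∀ k : ι, Integrable (fun ω => ∑ k' ∈ F.erase k, x k ω * x k' ω) μ :=
      fun k => integrable_finset_sum _ fun k' _ => hprodint k k'
    have hdoubleint : Integrable (fun ω => ∑ k ∈ F, ∑ k' ∈ F.erase k, x k ω * x k' ω) μ :=
      integrable_finset_sum _ fun k _ => hinnerint k
    have hSqInt : Integrable (fun ω => (S ω)^2) μ := by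
      have hfe : (fun ω => (S ω)^2) =
          fun ω => S ω + ∑ k ∈ F, ∑ k' ∈ F.erase k, x k ω * x k' ω := by
        funext ω
        exact mySq_sum_01 F (fun k => x k ω) (fun k _ => hx01 k ω)
      rw [hfe]
      exact hSint.add hdoubleint
    have hESq : ∫ ω, (S ω)^2 ∂μ ≤ (∑ k ∈ F, p k) + (∑ k ∈ F, p k)^2 := by
      have heq : ∫ ω, (S ω)^2 ∂μ =
          (∑ k ∈ F, p k) + ∑ k ∈ F, ∑ k' ∈ F.erase k, p k * p k' := by
        calc ∫ ω, (S ω)^2 ∂μ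
            = ∫ ω, (S ω + ∑ k ∈ F, ∑ k' ∈ F.erase k, x k ω * x k' ω) ∂μ := by
              congr 1
              funext ω
              exact mySq_sum_01 F (fun k => x k ω) (fun k _ => hx01 k ω)
          _ = (∫ ω, S ω ∂μ) + ∫ ω, (∑ k ∈ F, ∑ k' ∈ F.erase k, x k ω * x k' ω) ∂μ :=
              integral_add hSint hdoubleint
          _ = (∑ k ∈ F, p k) + ∑ k ∈ F, ∑ k' ∈ F.erase k, p k * p k' := by
              rw [hES, integral_finset_sum _ fun k _ => hinnerint k]
              congr 1
              refine Finset.sum_congr rfl fun k _ => ?_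
              rw [integral_finset_sum _ fun k' _ => hprodint k k']
              exact Finset.sum_congr rfl fun k' hk' =>
                hxmul k k' (Finset.ne_of_mem_erase hk').symm
      rw [heq]
      have hsq : ∑ k ∈ F, ∑ k' ∈ F.erase k, p k * p k' ≤ (∑ k ∈ F, p k)^2 := by
        rw [sq, Finset.sum_mul_sum]
        refine Finset.sum_le_sum fun k hk => ?_
        refine Finset.sum_le_sum_of_subset_of_nonneg (Finset.erase_subset _ _)
          fun k' _ _ => mul_nonneg (hpnn k) (hpnn k')
      linarith
    have hpt : ∀ ω, S ω - ((S ω)^2 - S ω)/2 ≤ min (S ω) 1 := fun ω =>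
      myMin_sum_ge F (fun k => x k ω) (fun k _ => hx01 k ω)
    have hgint : Integrable (fun ω => ((S ω)^2 - S ω)/2) μ := by
      exact (hSqInt.sub hSint).div_const 2
    have hlhsint : Integrable (fun ω => S ω - ((S ω)^2 - S ω)/2) μ := by
      exact hSint.sub hgint
    have hmono := integral_mono hlhsint hminint hpt
    have heval : ∫ ω, (S ω - ((S ω)^2 - S ω)/2) ∂μ
        = (∑ k ∈ F, p k) - ((∫ ω, (S ω)^2 ∂μ) - (∑ k ∈ F, p k))/2 := by
      rw [integral_sub hSint hgint]
      have h1 : ∫ ω, (((S ω)^2 - S ω)/2) ∂μ = ((∫ ω, (S ω)^2 ∂μ) - ∑ k ∈ F, p k)/2 := by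
        rw [integral_div]
        congr 1
        rw [integral_sub hSqInt hSint, hES]
      rw [h1, hES]
    rw [heval] at hmono
    linarith
  · have hpt : ∀ ω, min (S ω) 1 ≤ S ω := fun ω => min_le_left _ _
    have hmono := integral_mono hminint hSint hpt
    rwa [hES] at hmono
  · exact integral_nonneg fun ω => le_min (hSnn ω) one_pos.le

/-! ### Counting lemmas -/

lemma myNatCard_subtype_eq_filter {α : Type*} [Fintype α] (P : α → Prop) [DecidablePred P] :
    (Finset.univ.filter P).card = Nat.card {x // P x} := by
  rw [Nat.card_eq_fintype_card, Fintype.card_subtype]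

lemma myCard_ne_pair {M : ℕ} {a b : Fin M} (hab : a ≠ b) :
    Fintype.card {c : Fin M // c ≠ a ∧ c ≠ b} = M - 2 := by
  classical
  rw [Fintype.card_subtype]
  have hflt : (Finset.univ.filter (fun c : Fin M => c ≠ a ∧ c ≠ b)) = Finset.univ \ {a, b} := by
    ext c; simp [not_or]
  rw [hflt, Finset.card_sdiff_of_subset (Finset.subset_univ _), Finset.card_pair hab]
  simp

lemma myCard_cover_le {M n : ℕ} (i j : Fin n) (hij : i ≠ j) :
    Nat.card {L : Fin M ↪ Fin n // (∃ a, L a = i) ∧ (∃ b, L b = j)} ≤ M^2 * n^(M-2) := by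
  classical
  set Q := {q : Fin M × Fin M // q.1 ≠ q.2}
  set Tgt := Σ q : Q, ({c : Fin M // c ≠ q.1.1 ∧ c ≠ q.1.2} → Fin n)
  let decode : Tgt → (Fin M → Fin n) := fun s c =>
    if h1 : c = s.1.1.1 then i else if h2 : c = s.1.1.2 then j else s.2 ⟨c, h1, h2⟩
  let enc : ∀ (L : Fin M ↪ Fin n) (a b : Fin M), L a = i → L b = j → Tgt :=
    fun L a b ha hb =>
      ⟨⟨(a, b), fun hc => hij (by rw [← ha, ← hb]; exact congrArg L hc)⟩,
        fun c => L c.1⟩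
  let φ : {L : Fin M ↪ Fin n // (∃ a, L a = i) ∧ (∃ b, L b = j)} → Tgt := fun L =>
    enc L.1 L.2.1.choose L.2.2.choose L.2.1.choose_spec L.2.2.choose_spec
  have hdec : ∀ L, decode (φ L) = ⇑L.1 := by
    intro L
    funext c
    by_cases h1 : c = L.2.1.choose
    · simp only [decode, φ, enc, h1, dif_pos]
      exact L.2.1.choose_spec.symm
    · by_cases h2 : c = L.2.2.choose
      · simp only [decode, φ, enc]
        rw [dif_neg h1, dif_pos h2, h2]
        exact L.2.2.choose_spec.symm
      · simp only [decode, φ, enc]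
        rw [dif_neg h1, dif_neg h2]
  have hinj : Function.Injective φ := by
    intro L1 L2 hφ
    have hcoe := congrArg decode hφ
    rw [hdec L1, hdec L2] at hcoe
    exact Subtype.ext (DFunLike.coe_injective hcoe)
  rw [Nat.card_eq_fintype_card]
  calc Fintype.card {L : Fin M ↪ Fin n // (∃ a, L a = i) ∧ (∃ b, L b = j)}
      ≤ Fintype.card Tgt := Fintype.card_le_of_injective φ hinj
    _ ≤ M^2 * n^(M-2) := by
        rw [Fintype.card_sigma]
        have hfib : ∀ q : Q, Fintype.card ({c : Fin M // c ≠ q.1.1 ∧ c ≠ q.1.2} → Fin n)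
            = n^(M-2) := by
          intro q
          rw [Fintype.card_fun, myCard_ne_pair q.2, Fintype.card_fin]
        calc (∑ q : Q, Fintype.card ({c : Fin M // c ≠ q.1.1 ∧ c ≠ q.1.2} → Fin n))
            = Fintype.card Q * n^(M-2) := by
              rw [Finset.sum_congr rfl (fun q _ => hfib q), Finset.sum_const, smul_eq_mul,
                Finset.card_univ]
          _ ≤ M^2 * n^(M-2) := by
              apply Nat.mul_le_mul_right
              calc Fintype.card Q ≤ Fintype.card (Fin M × Fin M) := Fintype.card_subtype_le _
                _ = M^2 := by simp [sq]

lemma myCard_ne_pair' {n : ℕ} {i j : Fin n} (hij : i ≠ j) :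
    Fintype.card {v : Fin n // v ≠ i ∧ v ≠ j} = n - 2 := by
  classical
  rw [Fintype.card_subtype]
  have hflt : (Finset.univ.filter (fun v : Fin n => v ≠ i ∧ v ≠ j)) = Finset.univ \ {i, j} := by
    ext v; simp [not_or]
  rw [hflt, Finset.card_sdiff_of_subset (Finset.subset_univ _), Finset.card_pair hij]
  simp

lemma myCard_cover_ge {M n : ℕ} (hM : 2 ≤ M) (i j : Fin n) (hij : i ≠ j) :
    (n - 2).descFactorial (M - 2) ≤
      Nat.card {L : Fin M ↪ Fin n // (∃ a, L a = i) ∧ (∃ b, L b = j)} := by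
  classical
  set Src := Fin (M - 2) ↪ {v : Fin n // v ≠ i ∧ v ≠ j}
  have hbuild : ∀ e : Src, ∃ L : {L : Fin M ↪ Fin n // (∃ a, L a = i) ∧ (∃ b, L b = j)},
      (∀ d : Fin (M - 2), L.1 ⟨(d : ℕ) + 2, by omega⟩ = (e d).1) := by
    intro e
    refine ⟨⟨⟨fun c => if h0 : (c : ℕ) = 0 then i else if h1 : (c : ℕ) = 1 then j
      else (e ⟨(c : ℕ) - 2, by omega⟩).1, ?_⟩, ?_, ?_⟩, ?_⟩
    · intro c c' hcc
      simp only at hcc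
      by_cases h0 : (c : ℕ) = 0 <;> by_cases h0' : (c' : ℕ) = 0 <;>
        by_cases h1 : (c : ℕ) = 1 <;> by_cases h1' : (c' : ℕ) = 1 <;>
        simp only [h0, h0', h1, h1', dif_pos, dif_neg, Nat.one_ne_zero, Nat.zero_ne_one,
          not_false_iff] at hcc <;>
      first
        | (exact Fin.ext (by omega))
        | (exact absurd hcc hij)
        | (exact absurd hcc.symm hij)
        | (exact absurd hcc.symm (e _).2.1)
        | (exact absurd hcc (e _).2.1)
        | (exact absurd hcc.symm (e _).2.2)
        | (exact absurd hcc (e _).2.2)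
        | (refine Fin.ext ?_
           have hinj := e.injective (Subtype.ext hcc)
           have hval := congrArg Fin.val hinj
           simp only at hval
           omega)
    · exact ⟨⟨0, by omega⟩, by simp⟩
    · exact ⟨⟨1, by omega⟩, by simp⟩
    · intro d
      show (if h0 : ((d:ℕ)+2) = 0 then i else if h1 : ((d:ℕ)+2) = 1 then j
        else (e ⟨(d:ℕ)+2-2, by omega⟩).1) = (e d).1
      rw [dif_neg (by omega), dif_neg (by omega)]
      congr 1
  choose ψ hψ using hbuild
  have hinj : Function.Injective ψ := by
    intro e1 e2 he
    ext d
    have h1 := hψ e1 d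
    have h2 := hψ e2 d
    rw [he] at h1
    have h12 := h1.symm.trans h2
    exact congrArg Fin.val h12
  rw [Nat.card_eq_fintype_card]
  calc (n - 2).descFactorial (M - 2)
      = Fintype.card Src := by
        rw [Fintype.card_embedding_eq, Fintype.card_fin, myCard_ne_pair' hij]
    _ ≤ _ := Fintype.card_le_of_injective ψ hinj

/-! ### The covering Finset and the expected-overlap sum -/

/-- The finite set of generators covering the pair `(i,j)`. -/
noncomputable def myFil {T : Type} [Fintype T] [DecidableEq T] {m : T → ℕ} {n : ℕ} (i j : Fin n) :
    Finset (Σ t : T, Fin (m t) ↪ Fin n) :=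
  Finset.univ.filter (fun k => (∃ a, k.2 a = i) ∧ (∃ b, k.2 b = j))

/-- The total generating probability over generators covering `(i,j)`. -/
noncomputable def mySij {T : Type} [Fintype T] [DecidableEq T] {m : T → ℕ} {n : ℕ}
    (p : (Σ t : T, Fin (m t) ↪ Fin n) → ℝ) (i j : Fin n) : ℝ :=
  ∑ k ∈ myFil i j, p k

/-- Under (A5) and (A6), with `γ = max_t (m_t − h_t − 1) ∈ (0,1]`,
one has `Δ_u(n) = Θ(n^γ)`. -/
theorem deltaU_asymptotics
    {T : Type} [Fintype T] [DecidableEq T] [Nonempty T]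
    (m : T → ℕ) (hm2 : ∀ t, 2 ≤ m t)
    -- the generating probabilities p_n(t,L)
    (p : (n : ℕ) → (Σ t : T, Fin (m t) ↪ Fin n) → ℝ)
    (hp : ∀ n k, p n k ∈ Set.Icc (0 : ℝ) 1)
    -- the probability spaces and the independent Bernoulli families x(t,L)
    {Ω : ℕ → Type} [∀ n, MeasurableSpace (Ω n)]
    (μ : (n : ℕ) → Measure (Ω n)) [∀ n, IsProbabilityMeasure (μ n)]
    (x : (n : ℕ) → (Σ t : T, Fin (m t) ↪ Fin n) → Ω n → ℝ)
    (hxmeas : ∀ n k, Measurable (x n k))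
    (hx01 : ∀ n k ω, x n k ω = 0 ∨ x n k ω = 1)
    (hxp : ∀ n k, μ n {ω | x n k ω = 1} = ENNReal.ofReal (p n k))
    (hindep : ∀ n, iIndepFun (x n) (μ n))
    -- the weighted adjacency matrix, its expectation, and Δ_w
    (Aw : (n : ℕ) → Ω n → Matrix (Fin n) (Fin n) ℝ)
    (hAw : ∀ n ω, Aw n ω = ∑ k, x n k ω • completeSub n k)
    (EAw : (n : ℕ) → Matrix (Fin n) (Fin n) ℝ)
    (hEAw : ∀ n i j, EAw n i j = ∫ ω, Aw n ω i j ∂(μ n))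
    (Δw : ℕ → ℝ) (hΔw : ∀ n, Δw n = rowSumNorm (EAw n))
    -- the unweighted adjacency matrix, its expectation, and Δ_u
    (Au : (n : ℕ) → Ω n → Matrix (Fin n) (Fin n) ℝ)
    (hAu : ∀ n ω i j, Au n ω i j = min (Aw n ω i j) 1)
    (EAu : (n : ℕ) → Matrix (Fin n) (Fin n) ℝ)
    (hEAu : ∀ n i j, EAu n i j = ∫ ω, Au n ω i j ∂(μ n))
    (Δu : ℕ → ℝ) (hΔu : ∀ n, Δu n = rowSumNorm (EAu n))
    -- Assumption (A5)
    (h l u : T → ℝ)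
    (hl : ∀ t, 0 < l t) (hlu : ∀ t, l t < u t)
    (hh1 : ∀ t, (m t : ℝ) - 2 < h t) (hh2 : ∀ t, h t < (m t : ℝ) - 1)
    (hA5 : ∀ n k, p n k = 0 ∨
      ∃ b ∈ Set.Icc (l k.1) (u k.1), p n k = b / (n : ℝ) ^ (h k.1))
    -- Assumption (A6)
    (ξ : T → ℝ) (hξ : ∀ t, ξ t ∈ Set.Ioo (0 : ℝ) 1)
    (hA6a : ∀ (n : ℕ) (t : T),
      ξ t * (Nat.card (Fin (m t) ↪ Fin n) : ℝ) ≤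
        (Nat.card {L : Fin (m t) ↪ Fin n // 0 < p n ⟨t, L⟩} : ℝ))
    (hA6b : ∀ (n : ℕ) (t : T) (i j : Fin n),
      ξ t * (Nat.card {L : Fin (m t) ↪ Fin n // (∃ a, L a = i) ∧ (∃ b, L b = j)} : ℝ) ≤
        (Nat.card {L : Fin (m t) ↪ Fin n //
          ((∃ a, L a = i) ∧ (∃ b, L b = j)) ∧ 0 < p n ⟨t, L⟩} : ℝ))
    (γ : ℝ) (hγ : γ = ⨆ t : T, ((m t : ℝ) - h t - 1)) :
    (0 < γ ∧ γ ≤ 1) ∧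
    ∃ (c₁ c₂ : ℝ) (N : ℕ), 0 < c₁ ∧ c₁ ≤ c₂ ∧
      ∀ n : ℕ, N ≤ n →
        c₁ * (n : ℝ) ^ γ ≤ Δu n ∧ Δu n ≤ c₂ * (n : ℝ) ^ γ := by
  classical
  -- γ facts
  set g : T → ℝ := fun t => (m t : ℝ) - h t - 1 with hgdef
  obtain ⟨t0, ht0⟩ := Finite.exists_max g
  have hγt0 : γ = g t0 := by
    rw [hγ]
    exact le_antisymm (ciSup_le ht0) (le_ciSup (Set.Finite.bddAbove (Set.finite_range g)) t0)
  have hγpos : 0 < γ := by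
    have := hh2 t0
    rw [hγt0]
    simp only [hgdef]
    linarith
  have hγlt1 : γ < 1 := by
    have := hh1 t0
    rw [hγt0]
    simp only [hgdef]
    linarith
  have hgle : ∀ t, g t ≤ γ := fun t => hγt0 ▸ ht0 t
  have hu : ∀ t, 0 < u t := fun t => (hl t).trans (hlu t)
  set m0 : ℕ := m t0 with hm0
  set C : ℝ := ∑ t, u t * (m t : ℝ)^2 with hC
  have hCpos : 0 < C :=
    Finset.sum_pos (fun t _ => by have := hu t; have := hm2 t; positivity) Finset.univ_nonempty
  set D : ℝ := ξ t0 * l t0 / 2 ^ (m0 - 2) with hD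
  have hDpos : 0 < D := by
    have h1 := (hξ t0).1
    have h2 := hl t0
    positivity
  have hp0 : ∀ n k, 0 ≤ p n k := fun n k => (hp n k).1
  -- rpow exponent computation
  have hrpow_eq : ∀ (t : T) (n : ℕ), 1 ≤ n →
      ((n:ℝ)) ^ (m t - 2 : ℕ) / (n:ℝ) ^ (h t) = (n:ℝ) ^ (g t - 1) := by
    intro t n hn
    have hnpos : (0:ℝ) < n := by exact_mod_cast hn
    have h1 : ((n:ℝ)) ^ ((m t - 2 : ℕ)) = (n:ℝ) ^ ((m t : ℝ) - 2) := by
      rw [← Real.rpow_natCast (n:ℝ) (m t - 2)]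
      congr 1
      rw [Nat.cast_sub (hm2 t)]
      norm_num
    rw [h1, ← Real.rpow_sub hnpos]
    congr 1
    simp only [hgdef]
    ring
  -- key1 : Bernoulli bounds for off-diagonal entries of EAu
  have key1 : ∀ (n : ℕ) (i j : Fin n), i ≠ j →
      (mySij (p n) i j - (mySij (p n) i j)^2/2 ≤ EAu n i j ∧
        EAu n i j ≤ mySij (p n) i j ∧ 0 ≤ EAu n i j) := by
    intro n i j hij
    have hAwij : ∀ ω, Aw n ω i j = ∑ k ∈ myFil i j, x n k ω := by
      intro ω
      rw [hAw]
      simp only [Matrix.sum_apply, Matrix.smul_apply, completeSub, smul_eq_mul]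
      rw [myFil, Finset.sum_filter]
      refine Finset.sum_congr rfl fun k _ => ?_
      by_cases hk : (∃ a, k.2 a = i) ∧ (∃ b, k.2 b = j)
      · simp [hk, hij]
      · simp [hk]
    have hEAuij : EAu n i j = ∫ ω, min (∑ k ∈ myFil i j, x n k ω) 1 ∂(μ n) := by
      rw [hEAu]
      have hfe : ∀ ω, Au n ω i j = min (∑ k ∈ myFil i j, x n k ω) 1 := fun ω => by
        rw [hAu, hAwij]
      simp only [hfe]
    have hxint : ∀ k, ∫ ω, x n k ω ∂(μ n) = p n k := fun k =>
      myIntegral_of_01 (μ n) (hxmeas n k) (hx01 n k) (hp0 n k) (hxp n k)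
    have hxmul : ∀ k k', k ≠ k' →
        ∫ ω, x n k ω * x n k' ω ∂(μ n) = p n k * p n k' := by
      intro k k' hkk'
      have hint : ∀ k0, Integrable (x n k0) (μ n) := fun k0 =>
        myIntegrable_of_bound (hxmeas n k0) 1
          (fun ω => by rcases hx01 n k0 ω with hh | hh <;> simp [hh])
      have hmul := ((hindep n).indepFun hkk').integral_mul_eq_mul_integral (hint k).1 (hint k').1
      rw [← hxint k, ← hxint k']
      exact hmul
    rw [mySij, hEAuij]
    exact myBernoulli_min_bounds (myFil i j) (x n) (p n) (hxmeas n) (hx01 n) hxint hxmul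
  -- key4 : diagonal entries vanish
  have key4 : ∀ (n : ℕ) (i : Fin n), EAu n i i = 0 := by
    intro n i
    rw [hEAu]
    have h0 : ∀ ω, Au n ω i i = 0 := by
      intro ω
      rw [hAu, hAw]
      have hz : (∑ k, x n k ω • completeSub n k) i i = 0 := by
        simp only [Matrix.sum_apply, Matrix.smul_apply, completeSub, smul_eq_mul]
        apply Finset.sum_eq_zero
        intro k _
        simp
      rw [hz]
      exact min_eq_left zero_le_one
    simp only [h0, integral_zero]
  -- key2 : upper bound on mySij
  have key2 : ∀ n : ℕ, 1 ≤ n → ∀ i j : Fin n, i ≠ j →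
      mySij (p n) i j ≤ C * (n:ℝ) ^ (γ - 1) := by
    intro n hn i j hij
    have hnpos : (0:ℝ) < n := by exact_mod_cast hn
    have hn1 : (1:ℝ) ≤ n := by exact_mod_cast hn
    have hpow : ∀ t : T, (0:ℝ) < (n:ℝ) ^ (h t) := fun t => Real.rpow_pos_of_pos hnpos _
    have hple : ∀ k : (Σ t : T, Fin (m t) ↪ Fin n), p n k ≤ u k.1 / (n:ℝ) ^ (h k.1) := by
      intro k
      rcases hA5 n k with h0 | ⟨b, hb, hbe⟩
      · rw [h0]
        have := hu k.1
        positivity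
      · rw [hbe]
        exact (div_le_div_iff_of_pos_right (hpow k.1)).mpr hb.2
    have hstep1 : mySij (p n) i j ≤
        ∑ t : T, ((Nat.card {L : Fin (m t) ↪ Fin n //
          (∃ a, L a = i) ∧ (∃ b, L b = j)} : ℝ)) * (u t / (n:ℝ) ^ (h t)) := by
      unfold mySij myFil
      refine le_trans (Finset.sum_le_sum fun k _ => hple k) ?_
      rw [Finset.sum_filter, ← Finset.univ_sigma_univ, Finset.sum_sigma]
      refine le_of_eq (Finset.sum_congr rfl fun t _ => ?_)
      dsimp only
      rw [← Finset.sum_filter, Finset.sum_const, nsmul_eq_mul, myNatCard_subtype_eq_filter]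
    refine le_trans hstep1 ?_
    have hterm : ∀ t : T,
        ((Nat.card {L : Fin (m t) ↪ Fin n //
          (∃ a, L a = i) ∧ (∃ b, L b = j)} : ℝ)) * (u t / (n:ℝ) ^ (h t))
        ≤ (u t * (m t : ℝ)^2) * (n:ℝ) ^ (γ - 1) := by
      intro t
      have hcard : ((Nat.card {L : Fin (m t) ↪ Fin n //
          (∃ a, L a = i) ∧ (∃ b, L b = j)}) : ℝ)
          ≤ (m t : ℝ)^2 * (n:ℝ) ^ (m t - 2 : ℕ) := by
        have hle := myCard_cover_le (M := m t) i j hij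
        calc ((Nat.card {L : Fin (m t) ↪ Fin n //
            (∃ a, L a = i) ∧ (∃ b, L b = j)}) : ℝ)
            ≤ (((m t)^2 * n^(m t - 2) : ℕ) : ℝ) := by exact_mod_cast hle
          _ = (m t : ℝ)^2 * (n:ℝ) ^ (m t - 2 : ℕ) := by push_cast; ring
      have hre := hrpow_eq t n hn
      have hge : (0:ℝ) ≤ u t / (n:ℝ) ^ (h t) := by
        have := hu t
        positivity
      calc ((Nat.card {L : Fin (m t) ↪ Fin n //
          (∃ a, L a = i) ∧ (∃ b, L b = j)}) : ℝ) * (u t / (n:ℝ) ^ (h t))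
          ≤ ((m t : ℝ)^2 * (n:ℝ) ^ (m t - 2 : ℕ)) * (u t / (n:ℝ) ^ (h t)) :=
            mul_le_mul_of_nonneg_right hcard hge
        _ = (u t * (m t : ℝ)^2) * ((n:ℝ) ^ (m t - 2 : ℕ) / (n:ℝ) ^ (h t)) := by ring
        _ = (u t * (m t : ℝ)^2) * (n:ℝ) ^ (g t - 1) := by rw [hre]
        _ ≤ (u t * (m t : ℝ)^2) * (n:ℝ) ^ (γ - 1) := by
            have hm := hm2 t
            have hut := hu t
            refine mul_le_mul_of_nonneg_left ?_ (by positivity)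
            exact Real.rpow_le_rpow_of_exponent_le hn1 (by linarith [hgle t])
    calc ∑ t : T, ((Nat.card {L : Fin (m t) ↪ Fin n //
          (∃ a, L a = i) ∧ (∃ b, L b = j)} : ℝ)) * (u t / (n:ℝ) ^ (h t))
        ≤ ∑ t : T, (u t * (m t : ℝ)^2) * (n:ℝ) ^ (γ - 1) :=
          Finset.sum_le_sum fun t _ => hterm t
      _ = C * (n:ℝ) ^ (γ - 1) := by rw [hC, ← Finset.sum_mul]
  -- key3 : lower bound on mySij
  have key3 : ∀ n : ℕ, 2 * m t0 ≤ n → ∀ i j : Fin n, i ≠ j →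
      D * (n:ℝ) ^ (γ - 1) ≤ mySij (p n) i j := by
    intro n hn i j hij
    have hmm : 2 ≤ m t0 := hm2 t0
    have hn1 : 1 ≤ n := by omega
    have hnpos : (0:ℝ) < n := by exact_mod_cast hn1
    have hpow : (0:ℝ) < (n:ℝ) ^ (h t0) := Real.rpow_pos_of_pos hnpos _
    set G := Finset.univ.filter (fun L : Fin (m t0) ↪ Fin n =>
      ((∃ a, L a = i) ∧ (∃ b, L b = j)) ∧ 0 < p n ⟨t0, L⟩) with hG
    have hsub : G.image (Sigma.mk t0) ⊆ myFil i j := by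
      intro k hk
      simp only [Finset.mem_image] at hk
      obtain ⟨L, hL, rfl⟩ := hk
      rw [hG, Finset.mem_filter] at hL
      unfold myFil
      rw [Finset.mem_filter]
      exact ⟨Finset.mem_univ _, hL.2.1⟩
    have h1 : ∑ k ∈ G.image (Sigma.mk t0), p n k ≤ mySij (p n) i j := by
      unfold mySij
      exact Finset.sum_le_sum_of_subset_of_nonneg hsub (fun k _ _ => hp0 n k)
    have h2 : ∑ k ∈ G.image (Sigma.mk t0), p n k = ∑ L ∈ G, p n ⟨t0, L⟩ :=
      Finset.sum_image (fun L _ L' _ hLL' => by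
        injection hLL' with ha hb)
    have hpge : ∀ L ∈ G, l t0 / (n:ℝ) ^ (h t0) ≤ p n ⟨t0, L⟩ := by
      intro L hL
      rw [hG, Finset.mem_filter] at hL
      have hposL : 0 < p n ⟨t0, L⟩ := hL.2.2
      rcases hA5 n ⟨t0, L⟩ with h0 | ⟨b, hb, hbe⟩
      · rw [h0] at hposL
        exact absurd hposL (lt_irrefl 0)
      · rw [hbe]
        exact (div_le_div_iff_of_pos_right hpow).mpr hb.1
    have h3 : (G.card : ℝ) * (l t0 / (n:ℝ) ^ (h t0)) ≤ ∑ L ∈ G, p n ⟨t0, L⟩ := by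
      have hnsmul := Finset.card_nsmul_le_sum G (fun L => p n ⟨t0, L⟩) _ hpge
      rwa [nsmul_eq_mul] at hnsmul
    have hcard : ξ t0 * ((n:ℝ)/2) ^ (m t0 - 2) ≤ (G.card : ℝ) := by
      have hA := hA6b n t0 i j
      have hGcard : (G.card : ℝ) = (Nat.card {L : Fin (m t0) ↪ Fin n //
          ((∃ a, L a = i) ∧ (∃ b, L b = j)) ∧ 0 < p n ⟨t0, L⟩} : ℝ) := by
        rw [hG, myNatCard_subtype_eq_filter]
      have hnat1 := myCard_cover_ge (hm2 t0) i j hij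
      have hnat2 := Nat.pow_sub_le_descFactorial (n - 2) (m t0 - 2)
      have hq : ((n:ℝ)/2) ^ (m t0 - 2) ≤ ((n - 2 + 1 - (m t0 - 2) : ℕ) : ℝ) ^ (m t0 - 2) := by
        apply pow_le_pow_left₀ (by positivity)
        have h2q : n ≤ 2 * (n - 2 + 1 - (m t0 - 2)) := by omega
        have hcq : (n:ℝ) ≤ 2 * ((n - 2 + 1 - (m t0 - 2) : ℕ) : ℝ) := by exact_mod_cast h2q
        linarith
      have hchain : ((n - 2 + 1 - (m t0 - 2) : ℕ) : ℝ) ^ (m t0 - 2)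
          ≤ (Nat.card {L : Fin (m t0) ↪ Fin n //
              (∃ a, L a = i) ∧ (∃ b, L b = j)} : ℝ) := by
        have hc := le_trans hnat2 hnat1
        exact_mod_cast hc
      calc ξ t0 * ((n:ℝ)/2) ^ (m t0 - 2)
          ≤ ξ t0 * (Nat.card {L : Fin (m t0) ↪ Fin n //
              (∃ a, L a = i) ∧ (∃ b, L b = j)} : ℝ) :=
            mul_le_mul_of_nonneg_left (hq.trans hchain) (hξ t0).1.le
        _ ≤ (Nat.card {L : Fin (m t0) ↪ Fin n //
              ((∃ a, L a = i) ∧ (∃ b, L b = j)) ∧ 0 < p n ⟨t0, L⟩} : ℝ) := hA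
        _ = (G.card : ℝ) := hGcard.symm
    have hfin : ξ t0 * ((n:ℝ)/2) ^ (m t0 - 2) * (l t0 / (n:ℝ) ^ (h t0))
        = D * (n:ℝ) ^ (γ - 1) := by
      have hre := hrpow_eq t0 n hn1
      rw [div_pow]
      rw [show ξ t0 * ((n:ℝ) ^ (m t0 - 2) / 2 ^ (m t0 - 2)) * (l t0 / (n:ℝ) ^ (h t0))
          = (ξ t0 * l t0 / 2 ^ (m t0 - 2)) * ((n:ℝ) ^ (m t0 - 2) / (n:ℝ) ^ (h t0)) from by
            ring, hre, hD, hγt0]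
    have hfinal : D * (n:ℝ) ^ (γ - 1) ≤ (G.card : ℝ) * (l t0 / (n:ℝ) ^ (h t0)) := by
      rw [← hfin]
      have hll := hl t0
      exact mul_le_mul_of_nonneg_right hcard (by positivity)
    linarith
  -- choice of N
  have hev : ∀ᶠ n : ℕ in atTop, (2 * m t0 ≤ n ∧ 2 ≤ n) ∧ C * (n:ℝ) ^ (γ - 1) ≤ 1 := by
    have h1 : ∀ᶠ n : ℕ in atTop, 2 * m t0 ≤ n := eventually_ge_atTop _
    have h2 : ∀ᶠ n : ℕ in atTop, 2 ≤ n := eventually_ge_atTop _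
    have h3 : ∀ᶠ n : ℕ in atTop, C * (n:ℝ) ^ (γ - 1) ≤ 1 := by
      have htend : Tendsto (fun n : ℕ => C * (n:ℝ) ^ (γ - 1)) atTop (nhds 0) := by
        have ht1 : Tendsto (fun z : ℝ => z ^ (γ - 1)) atTop (nhds 0) := by
          have hz := tendsto_rpow_neg_atTop (y := 1 - γ) (by linarith)
          simpa [neg_sub] using hz
        have ht2 := ht1.comp tendsto_natCast_atTop_atTop
        have ht3 := ht2.const_mul C
        simpa using ht3
      exact (htend.eventually_lt_const one_pos).mono fun n hn => hn.le
    exact (h1.and h2).and h3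
  obtain ⟨N, hN⟩ := eventually_atTop.mp hev
  refine ⟨⟨hγpos, hγlt1.le⟩, D/4, max C (D/4), N, by positivity, le_max_right _ _, ?_⟩
  intro n hn
  obtain ⟨⟨hnm0, hn2⟩, hC1⟩ := hN n hn
  have hn1 : 1 ≤ n := by omega
  have hnpos : (0:ℝ) < n := by exact_mod_cast hn1
  haveI : Nonempty (Fin n) := ⟨⟨0, by omega⟩⟩
  have hsplit : (n:ℝ) * (n:ℝ) ^ (γ - 1) = (n:ℝ) ^ γ := by
    have hg1 : (n:ℝ) ^ γ = (n:ℝ) ^ (1 + (γ - 1)) := by norm_num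
    rw [hg1, Real.rpow_add hnpos, Real.rpow_one]
  have hEAunn : ∀ i j : Fin n, 0 ≤ EAu n i j := by
    intro i j
    by_cases hij : i = j
    · rw [hij, key4 n j]
    · exact (key1 n i j hij).2.2
  have hrow : ∀ i : Fin n, ∑ j, |EAu n i j| = ∑ j ∈ Finset.univ.erase i, EAu n i j := by
    intro i
    rw [Finset.sum_erase _ (key4 n i)]
    exact Finset.sum_congr rfl fun j _ => abs_of_nonneg (hEAunn i j)
  have hcarde : ∀ i : Fin n, (Finset.univ.erase i).card = n - 1 := fun i => by
    rw [Finset.card_erase_of_mem (Finset.mem_univ _), Finset.card_univ, Fintype.card_fin]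
  constructor
  · -- lower bound
    rw [hΔu]
    unfold rowSumNorm
    have hbdd : BddAbove (Set.range fun i : Fin n => ∑ j, |EAu n i j|) :=
      Set.Finite.bddAbove (Set.finite_range _)
    refine le_trans ?_ (le_ciSup hbdd (⟨0, by omega⟩ : Fin n))
    set i0 : Fin n := ⟨0, by omega⟩ with hi0
    rw [hrow i0]
    have hentry : ∀ j ∈ Finset.univ.erase i0, D * (n:ℝ) ^ (γ - 1)/2 ≤ EAu n i0 j := by
      intro j hj
      have hij : i0 ≠ j := (Finset.ne_of_mem_erase hj).symm
      have hs_up := key2 n hn1 i0 j hij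
      have hs_lo := key3 n hnm0 i0 j hij
      have hk1 := (key1 n i0 j hij).1
      have hs1 : mySij (p n) i0 j ≤ 1 := le_trans hs_up hC1
      have hsnn : 0 ≤ mySij (p n) i0 j := by
        have hdd : (0:ℝ) ≤ D * (n:ℝ) ^ (γ - 1) := by positivity
        linarith
      nlinarith [mul_nonneg hsnn (sub_nonneg.mpr hs1)]
    have hsum := Finset.card_nsmul_le_sum (Finset.univ.erase i0)
      (fun j => EAu n i0 j) _ hentry
    rw [hcarde i0, nsmul_eq_mul] at hsum
    have hcast : ((n - 1 : ℕ) : ℝ) = (n:ℝ) - 1 := by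
      rw [Nat.cast_sub hn1]
      norm_num
    rw [hcast] at hsum
    have hn2' : (2:ℝ) ≤ (n:ℝ) := by exact_mod_cast hn2
    have hhalf : (n:ℝ)/2 ≤ (n:ℝ) - 1 := by linarith
    have hfactor : D/4 * (n:ℝ) ^ γ ≤ ((n:ℝ) - 1) * (D * (n:ℝ) ^ (γ - 1)/2) := by
      have hrp : (0:ℝ) ≤ D * (n:ℝ) ^ (γ - 1)/2 := by positivity
      calc D/4 * (n:ℝ) ^ γ = ((n:ℝ)/2) * (D * (n:ℝ) ^ (γ - 1)/2) := by
            rw [← hsplit]; ring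
        _ ≤ ((n:ℝ) - 1) * (D * (n:ℝ) ^ (γ - 1)/2) :=
            mul_le_mul_of_nonneg_right hhalf hrp
    linarith
  · -- upper bound
    rw [hΔu]
    unfold rowSumNorm
    refine ciSup_le fun i => ?_
    rw [hrow i]
    have hentry : ∀ j ∈ Finset.univ.erase i, EAu n i j ≤ C * (n:ℝ) ^ (γ - 1) := by
      intro j hj
      have hij : i ≠ j := (Finset.ne_of_mem_erase hj).symm
      exact le_trans (key1 n i j hij).2.1 (key2 n hn1 i j hij)
    have hsum := Finset.sum_le_card_nsmul (Finset.univ.erase i)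
      (fun j => EAu n i j) _ hentry
    rw [hcarde i, nsmul_eq_mul] at hsum
    have hcast : ((n - 1 : ℕ) : ℝ) ≤ (n:ℝ) := by exact_mod_cast Nat.sub_le n 1
    have hCr : (0:ℝ) ≤ C * (n:ℝ) ^ (γ - 1) := by positivity
    have hle2 : ((n - 1 : ℕ) : ℝ) * (C * (n:ℝ) ^ (γ - 1)) ≤ (n:ℝ) * (C * (n:ℝ) ^ (γ - 1)) :=
      mul_le_mul_of_nonneg_right hcast hCr
    have heq : (n:ℝ) * (C * (n:ℝ) ^ (γ - 1)) = C * (n:ℝ) ^ γ := by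
      rw [← hsplit]; ring
    have hmax : C * (n:ℝ) ^ γ ≤ max C (D/4) * (n:ℝ) ^ γ :=
      mul_le_mul_of_nonneg_right (le_max_left _ _) (Real.rpow_nonneg hnpos.le _)
    linarith
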